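/- For all integers with 1 < i ≤ j ≤ r and 1 < i' ≤ j' ≤ r, if p(i,j) ≥ p(i',j'), then p(i−1,j) − p(i'−1,j') ≥ p(i,j) − p(i',j'). -/
import Mathlib

lemma ev_aux (r m : ℤ) : 2 ∣ (m - 1) * (2 * r - m + 2) := by
  rcases Int.even_or_odd m with ⟨k, hk⟩ | ⟨k, hk⟩
  · exact Dvd.dvd.mul_left (by omega) _
  · exact Dvd.dvd.mul_right (by omega) _

/-- For integers `1 < i ≤ j ≤ r` and `1 < i' ≤ j' ≤ r`, with
`p(i,j) = (i−1)(2r−i+2)/2 + (r−j+1)`, if `p(i,j) ≥ p(i',j')` then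
`p(i−1,j) − p(i'−1,j') ≥ p(i,j) − p(i',j')`. -/
theorem stmt_1 (r : ℤ) (hr : 1 ≤ r) (i j i' j' : ℤ)
    (hi : 1 < i) (hij : i ≤ j) (hjr : j ≤ r)
    (hi' : 1 < i') (hi'j' : i' ≤ j') (hj'r : j' ≤ r)
    (h : (i - 1) * (2 * r - i + 2) / 2 + (r - j + 1) ≥
      (i' - 1) * (2 * r - i' + 2) / 2 + (r - j' + 1)) :
    ((i - 1) - 1) * (2 * r - (i - 1) + 2) / 2 + (r - j + 1) -
        (((i' - 1) - 1) * (2 * r - (i' - 1) + 2) / 2 + (r - j' + 1)) ≥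
      (i - 1) * (2 * r - i + 2) / 2 + (r - j + 1) -
        ((i' - 1) * (2 * r - i' + 2) / 2 + (r - j' + 1)) := by
  obtain ⟨a, ha⟩ := ev_aux r i
  obtain ⟨a', ha'⟩ := ev_aux r i'
  obtain ⟨b, hb⟩ := ev_aux r (i - 1)
  obtain ⟨b', hb'⟩ := ev_aux r (i' - 1)
  have hda : (i - 1) * (2 * r - i + 2) / 2 = a := by omega
  have hda' : (i' - 1) * (2 * r - i' + 2) / 2 = a' := by omega
  have hdb : ((i - 1) - 1) * (2 * r - (i - 1) + 2) / 2 = b := by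
    rw [show ((i-1) - 1) * (2 * r - (i-1) + 2) = 2 * b from hb]; omega
  have hdb' : ((i' - 1) - 1) * (2 * r - (i' - 1) + 2) / 2 = b' := by
    rw [show ((i'-1) - 1) * (2 * r - (i'-1) + 2) = 2 * b' from hb']; omega
  rw [hda, hda'] at h
  rw [hda, hda', hdb, hdb']
  -- a - b = r - i + 2, a' - b' = r - i' + 2
  have hab : a - b = r - i + 2 := by nlinarith [ha, hb]
  have hab' : a' - b' = r - i' + 2 := by nlinarith [ha', hb']
  -- need i ≥ i'
  have hii : i' ≤ i := by
    by_contra hc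
    push_neg at hc
    have key : 2 * a' - 2 * a = (i' - i) * (2 * r + 3 - i - i') := by
      rw [← ha, ← ha']; ring
    nlinarith [key, mul_nonneg (show (0:ℤ) ≤ i' - i - 1 by omega) (show (0:ℤ) ≤ 2 * r + 2 - i - i' by omega)]
  omega
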